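/- The central polynomial coefficient majorizes all coefficients in its row: for all nonnegative integers k, l and all n with 0 ≤ n ≤ kl, C(k,n)_{l+1} ≤ C(k, floor(kl/2))_{l+1}. -/

import Mathlib

open Polynomial Finset

/-- Symmetric-unimodal about `d/2`: values decrease with distance from the center. -/
def PCGood (d : ℤ) (f : ℤ → ℕ) : Prop :=
  ∀ m m' : ℤ, |2*m' - d| ≤ |2*m - d| → f m ≤ f m'

lemma PCGood.symm {d : ℤ} {f : ℤ → ℕ} (hf : PCGood d f) (z : ℤ) : f z = f (d - z) := by
  have h1 : |2*(d - z) - d| = |2*z - d| := by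
    have : 2*(d - z) - d = -(2*z - d) := by ring
    rw [this, abs_neg]
  exact le_antisymm (hf z (d - z) h1.le) (hf (d - z) z h1.ge)

section Window

variable {d : ℤ} {f : ℤ → ℕ} (l : ℕ)

/-- The window sum of `f` of width `l+1`. -/
def PCWin (l : ℕ) (f : ℤ → ℕ) : ℤ → ℕ := fun z => ∑ y ∈ range (l+1), f (z - y)

lemma PCWin_symm (hf : PCGood d f) (z : ℤ) : PCWin l f z = PCWin l f (d + l - z) := by
  unfold PCWin
  rw [← Finset.sum_range_reflect]
  refine Finset.sum_congr rfl fun y hy => ?_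
  rw [mem_range] at hy
  have h1 : ((l + 1 - 1 - y : ℕ) : ℤ) = (l : ℤ) - y := by omega
  rw [h1, hf.symm (z - ((l:ℤ) - y))]
  congr 1
  ring

lemma PCWin_mono_step (hf : PCGood d f) (m : ℤ) (h : 2*(m+1) ≤ d + l) :
    PCWin l f m ≤ PCWin l f (m+1) := by
  unfold PCWin
  rw [Finset.sum_range_succ]
  rw [Finset.sum_range_succ' (fun y => f (m + 1 - y)) l]
  have h1 : ∀ y : ℕ, m + 1 - ((y:ℕ)+1 : ℕ) = m - y := by intro y; push_cast; ring
  simp only [h1, Nat.cast_zero, sub_zero]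
  have hstep : f (m - l) ≤ f (m + 1) := by
    apply hf
    have hl : (0:ℤ) ≤ (l:ℤ) := Int.natCast_nonneg l
    rcases abs_cases (2*(m+1) - d) with ⟨e1, _⟩ | ⟨e1, _⟩ <;>
      rcases abs_cases (2*(m - l) - d) with ⟨e2, _⟩ | ⟨e2, _⟩ <;> omega
  exact Nat.add_le_add_left hstep _

lemma PCWin_mono (hf : PCGood d f) (j : ℕ) :
    ∀ m : ℤ, 2*(m + j) ≤ d + l → PCWin l f m ≤ PCWin l f (m + j) := by
  induction j with
  | zero => intro m _; simp
  | succ j ih =>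
    intro m h
    have hj : ((j+1 : ℕ) : ℤ) = (j : ℤ) + 1 := by push_cast; ring
    rw [hj] at h ⊢
    have h2 : 2*(m + (j:ℤ)) ≤ d + l := by omega
    calc PCWin l f m ≤ PCWin l f (m + (j:ℤ)) := ih m h2
      _ ≤ PCWin l f (m + (j:ℤ) + 1) := PCWin_mono_step l hf _ (by omega)
      _ = PCWin l f (m + ((j:ℤ) + 1)) := by ring_nf

lemma PCWin_good (hf : PCGood d f) : PCGood (d + l) (PCWin l f) := by
  intro m m' habs
  set D : ℤ := d + l with hD
  set a : ℤ := min m (D - m) with ha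
  set b : ℤ := min m' (D - m') with hb
  have haeq : PCWin l f m = PCWin l f a := by
    rcases min_cases m (D - m) with ⟨h1, _⟩ | ⟨h1, _⟩
    · rw [ha, h1]
    · rw [ha, h1, ← PCWin_symm l hf]
  have hbeq : PCWin l f m' = PCWin l f b := by
    rcases min_cases m' (D - m') with ⟨h1, _⟩ | ⟨h1, _⟩
    · rw [hb, h1]
    · rw [hb, h1, ← PCWin_symm l hf]
  have h2a : 2*a - D = -|2*m - D| := by
    rcases abs_cases (2*m - D) with ⟨e, _⟩ | ⟨e, _⟩ <;> rw [e] <;> rcases min_cases m (D - m) with ⟨h1, h2⟩ | ⟨h1, h2⟩ <;> omega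
  have h2b : 2*b - D = -|2*m' - D| := by
    rcases abs_cases (2*m' - D) with ⟨e, _⟩ | ⟨e, _⟩ <;> rw [e] <;> rcases min_cases m' (D - m') with ⟨h1, h2⟩ | ⟨h1, h2⟩ <;> omega
  have hab : a ≤ b := by omega
  have h2b' : 2*b ≤ D := by
    have : (0:ℤ) ≤ |2*m' - D| := abs_nonneg _
    omega
  rw [haeq, hbeq]
  have := PCWin_mono l hf (b - a).toNat a (by omega)
  rwa [show a + ((b-a).toNat : ℤ) = b by omega] at this

end Window

/-- Extended coefficient function of `(1+X+⋯+X^l)^k` on `ℤ`. -/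
noncomputable def PCE (l k : ℕ) : ℤ → ℕ := fun z =>
  if 0 ≤ z then ((∑ i ∈ Finset.range (l + 1), (Polynomial.X : Polynomial ℕ) ^ i) ^ k).coeff z.toNat
  else 0

lemma PC_geom_coeff (l a : ℕ) :
    (∑ i ∈ Finset.range (l + 1), (Polynomial.X : Polynomial ℕ) ^ i).coeff a
      = if a ≤ l then 1 else 0 := by
  rw [Polynomial.finset_sum_coeff]
  simp only [Polynomial.coeff_X_pow]
  rw [Finset.sum_ite_eq (Finset.range (l+1)) a (fun _ => (1:ℕ))]
  simp [Nat.lt_succ_iff]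

lemma PCE_succ (l k : ℕ) (z : ℤ) :
    PCE l (k+1) z = ∑ y ∈ Finset.range (l+1), PCE l k (z - y) := by
  rcases lt_or_ge z 0 with hz | hz
  · rw [PCE, if_neg (by omega)]
    symm
    apply Finset.sum_eq_zero
    intro y _
    rw [PCE, if_neg (by have := Int.natCast_nonneg y; omega)]
  · obtain ⟨n, rfl⟩ := Int.eq_ofNat_of_zero_le hz
    set g : Polynomial ℕ := ∑ i ∈ Finset.range (l + 1), (Polynomial.X : Polynomial ℕ) ^ i with hg
    have key : PCE l (k+1) (n:ℤ) = ∑ a ∈ Finset.range (n+1), (if a ≤ l then 1 else 0) * (g^k).coeff (n - a) := by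
      rw [PCE, if_pos (by positivity)]
      have : ((n:ℤ)).toNat = n := rfl
      rw [this, pow_succ', Polynomial.coeff_mul,
        Finset.Nat.sum_antidiagonal_eq_sum_range_succ_mk]
      exact Finset.sum_congr rfl fun a _ => by rw [PC_geom_coeff]
    rw [key]
    have rhs : ∀ y : ℕ, PCE l k ((n:ℤ) - y) = if y ≤ n then (g^k).coeff (n - y) else 0 := by
      intro y
      rcases le_or_gt y n with h | h
      · rw [PCE, if_pos (by omega), if_pos h]
        congr 1
        omega
      · rw [PCE, if_neg (by omega), if_neg (by omega)]
    simp only [rhs]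
    -- both sides equal sum over range (max n l + 1) of h a := if a ≤ l ∧ a ≤ n then c (n-a) else 0
    rw [show ∑ a ∈ Finset.range (n+1), (if a ≤ l then 1 else 0) * (g^k).coeff (n - a)
        = ∑ a ∈ Finset.range (n+1), (if a ≤ l ∧ a ≤ n then (g^k).coeff (n - a) else 0) from
      Finset.sum_congr rfl fun a ha => by
        rw [Finset.mem_range] at ha
        by_cases h : a ≤ l <;> simp [h, Nat.lt_succ_iff.mp ha]]
    rw [show ∑ y ∈ Finset.range (l+1), (if y ≤ n then (g^k).coeff (n - y) else 0)
        = ∑ a ∈ Finset.range (l+1), (if a ≤ l ∧ a ≤ n then (g^k).coeff (n - a) else 0) from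
      Finset.sum_congr rfl fun a ha => by
        rw [Finset.mem_range] at ha
        by_cases h : a ≤ n <;> simp [h, Nat.lt_succ_iff.mp ha]]
    rw [Finset.sum_subset (Finset.range_subset_range.2 (by omega : n+1 ≤ max n l + 1)),
        Finset.sum_subset (Finset.range_subset_range.2 (by omega : l+1 ≤ max n l + 1))]
    · intro x _ hx
      rw [Finset.mem_range] at hx
      rw [if_neg (by omega)]
    · intro x _ hx
      rw [Finset.mem_range] at hx
      rw [if_neg (by omega)]

lemma PCE_good (l k : ℕ) : PCGood ((k:ℤ)*l) (PCE l k) := by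
  induction k with
  | zero =>
    intro m m' h
    simp only [Nat.cast_zero, zero_mul, sub_zero] at h
    unfold PCE
    simp only [pow_zero, Polynomial.coeff_one]
    by_cases hm : m = 0
    · have hm' : m' = 0 := by
        rw [hm] at h; simp at h
        have := abs_nonneg (2*m')
        have := neg_abs_le m'
        have := le_abs_self m'
        omega
      subst hm hm'; simp
    · have h1 : (if 0 ≤ m then if m.toNat = 0 then 1 else 0 else 0) = 0 := by
        split_ifs with h1 h2
        · omega
        · rfl
        · rfl
      rw [h1]
      exact Nat.zero_le _
  | succ k ih =>
    have hfun : PCE l (k+1) = PCWin l (PCE l k) := by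
      funext z
      rw [PCE_succ]
      rfl
    have hd : (((k+1) : ℕ):ℤ) * (l:ℤ) = (k:ℤ)*(l:ℤ) + (l:ℤ) := by push_cast; ring
    rw [hfun, hd]
    exact PCWin_good l ih

/-- The polynomial coefficient `C(k,n)_{l+1}`: the coefficient of `x^n` in
`(1 + x + x^2 + ⋯ + x^l)^k`. -/
noncomputable def polyCoeff (l k n : ℕ) : ℕ :=
  ((∑ i ∈ Finset.range (l + 1), (Polynomial.X : Polynomial ℕ) ^ i) ^ k).coeff n

theorem polyCoeff_le_central (l k n : ℕ) (hn : n ≤ k * l) :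
    polyCoeff l k n ≤ polyCoeff l k (k * l / 2) := by
  have h1 : polyCoeff l k n = PCE l k n := by
    rw [PCE, if_pos (Int.natCast_nonneg n)]
    rfl
  have h2 : polyCoeff l k (k*l/2) = PCE l k ((k*l/2 : ℕ) : ℤ) := by
    rw [PCE, if_pos (Int.natCast_nonneg _)]
    rfl
  rw [h1, h2]
  apply PCE_good l k
  have hD : ((k:ℤ)*l) = ((k*l : ℕ) : ℤ) := by push_cast; ring
  rw [hD]
  rcases abs_cases (2*((k*l/2 : ℕ):ℤ) - ((k*l:ℕ):ℤ)) with ⟨e1, _⟩ | ⟨e1, _⟩ <;>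
    rcases abs_cases (2*(n:ℤ) - ((k*l:ℕ):ℤ)) with ⟨e2, _⟩ | ⟨e2, _⟩ <;> omega
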